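/- det M₂ = 5 · (−1)^n. (In the paper's notation, det M₂ = 5(−1)^{t₀−1}, which via the formula tb(K₂) = −3 + det M₂ / det M yields the Thurston–Bennequin invariant tb(K₂) = 2.) -/

import Mathlib

open Matrix

/-- The linking matrix `M` from Section 6 of the paper: an `n x n` matrix over `Q`
(indices `0, ..., n-1` here correspond to the paper's `1, ..., n`) with diagonal entries `-2`
except the last one which is `-1`, entries `-1` on the super- and sub-diagonal,
extra entries `-1` at positions `(1,3)` and `(3,1)` (paper indexing), and zeros elsewhere. -/
def linkM (n : ℕ) : Matrix (Fin n) (Fin n) ℚ :=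
  Matrix.of fun i j =>
    if i = j then (if (i : ℕ) = n - 1 then -1 else -2)
    else if (i : ℕ) + 1 = (j : ℕ) ∨ (j : ℕ) + 1 = (i : ℕ) then -1
    else if ((i : ℕ) = 0 ∧ (j : ℕ) = 2) ∨ ((i : ℕ) = 2 ∧ (j : ℕ) = 0) then -1
    else 0

/-- The extended linking matrix: an `(n+1) x (n+1)` matrix (indices `0, 1, ..., n` as in the
paper), whose `(0,0)` entry is `0`, whose first row and first column (off the corner) are a
given vector `c`, and whose remaining `n x n` block is the linking matrix `linkM n`. -/
def extM (n : ℕ) (c : Fin n → ℚ) : Matrix (Fin (n + 1)) (Fin (n + 1)) ℚ :=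
  Matrix.of (Fin.cases (Fin.cases (0 : ℚ) c)
    (fun i => Fin.cases (c i) (fun j => linkM n i j)))

/-- The vector of linking numbers of `K₂` with the surgery curves: `c₁ = -3`, `c₂ = -1`,
`c₃ = -1` (paper indexing), all other entries `0`. -/
def vecC2 (n : ℕ) : Fin n → ℚ := fun i =>
  if (i : ℕ) = 0 then -3 else if (i : ℕ) = 1 then -1 else if (i : ℕ) = 2 then -1 else 0

/-- Entry function for the "reversed" extended linking matrix family. -/
def ent (N : ℕ) (d0 : ℚ) (i j : ℕ) : ℚ :=
  if i = j then (if i = 0 then d0 else if i = N then 0 else -2)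
  else if i + 1 = j ∨ j + 1 = i then (if i + j + 1 = 2 * N then -3 else -1)
  else if (i + 2 = j ∨ j + 2 = i) ∧ (i + j + 2 = 2 * N ∨ i + j + 4 = 2 * N) then -1
  else if (i + 3 = j ∨ j + 3 = i) ∧ i + j + 3 = 2 * N then -1
  else 0

def SMat (m : ℕ) : Matrix (Fin (m + 5)) (Fin (m + 5)) ℚ :=
  Matrix.of fun i j => ent (m + 4) (-1) i j

def TMat (m : ℕ) : Matrix (Fin (m + 5)) (Fin (m + 5)) ℚ :=
  Matrix.of fun i j => ent (m + 4) (-2) i j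

/-- generic 2-step cofactor expansion -/
theorem expand2 {k : ℕ} (A : Matrix (Fin (k + 2)) (Fin (k + 2)) ℚ)
    (h0 : ∀ j : Fin (k + 2), 2 ≤ (j : ℕ) → A 0 j = 0)
    (hc : ∀ i : Fin (k + 2), 2 ≤ (i : ℕ) → A i 0 = 0) :
    A.det = A 0 0 * (A.submatrix Fin.succ Fin.succ).det
      - A 0 1 * A 1 0 *
        ((A.submatrix Fin.succ Fin.succ).submatrix Fin.succ Fin.succ).det := by
  rw [Matrix.det_succ_row_zero, Fin.sum_univ_succ, Fin.sum_univ_succ]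
  have hz : ∀ j : Fin k,
      (-1 : ℚ) ^ ((j.succ.succ : Fin (k+2)) : ℕ) * A 0 j.succ.succ *
        (A.submatrix Fin.succ (Fin.succAbove j.succ.succ)).det = 0 := by
    intro j
    have : A 0 j.succ.succ = 0 := h0 _ (by simp [Fin.val_succ])
    simp [this]
  rw [Finset.sum_eq_zero fun j _ => hz j]
  have e1 : (Fin.succAbove (0 : Fin (k+2))) = Fin.succ := Fin.succAbove_zero
  -- expand the second minor along its first column
  have hB : (A.submatrix Fin.succ (Fin.succAbove (1 : Fin (k+2)))).det
      = A 1 0 * ((A.submatrix Fin.succ Fin.succ).submatrix Fin.succ Fin.succ).det := by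
    rw [Matrix.det_succ_column_zero, Fin.sum_univ_succ]
    have hcol0 : Fin.succAbove (1 : Fin (k+2)) 0 = 0 := by
      rw [Fin.succAbove_of_castSucc_lt] <;> simp
    have hz2 : ∀ i : Fin k,
        (-1 : ℚ) ^ ((i.succ : Fin (k+1)) : ℕ) *
          (A.submatrix Fin.succ (Fin.succAbove (1 : Fin (k+2)))) i.succ 0 *
          (((A.submatrix Fin.succ (Fin.succAbove (1 : Fin (k+2))))).submatrix
            (Fin.succAbove i.succ) Fin.succ).det = 0 := by
      intro i
      have : (A.submatrix Fin.succ (Fin.succAbove (1 : Fin (k+2)))) i.succ 0 = 0 := by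
        simp only [Matrix.submatrix_apply, hcol0]
        exact hc _ (by simp [Fin.val_succ])
      rw [this, mul_zero, zero_mul]
    rw [Finset.sum_eq_zero fun i _ => hz2 i]
    have hcols : (Fin.succAbove (1 : Fin (k+2))) ∘ Fin.succ =
        Fin.succ ∘ (Fin.succ : Fin k → Fin (k+1)) := by
      funext j
      have : ((0 : Fin (k+1)).succ).succAbove j.succ = ((0 : Fin (k+1)).succAbove j).succ :=
        Fin.succ_succAbove_succ 0 j
      simpa [Fin.succAbove_zero] using this
    simp only [Matrix.submatrix_apply, Matrix.submatrix_submatrix, Fin.succAbove_zero, hcol0,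
      add_zero, Fin.val_zero, pow_zero, one_mul, hcols, Fin.succ_zero_eq_one]
  simp only [e1, Fin.succ_zero_eq_one, hB, Fin.val_zero, Fin.val_one, pow_zero, pow_one, add_zero]
  ring

theorem sub_succ (m : ℕ) (d0 : ℚ) :
    (Matrix.of fun i j : Fin (m + 6) => ent (m + 5) d0 i j).submatrix Fin.succ Fin.succ
      = TMat m := by
  ext i j
  have hi := i.isLt
  have hj := j.isLt
  simp only [Matrix.submatrix_apply, Matrix.of_apply, TMat, ent, Fin.val_succ]
  split_ifs <;> first | rfl | exact (‹False›).elim | omega | (simp_all; omega) | simp_all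

theorem row0_zero (m : ℕ) (d0 : ℚ) (j : Fin (m + 7)) (hj : 2 ≤ (j : ℕ)) :
    (Matrix.of fun i j : Fin (m + 7) => ent (m + 6) d0 i j) 0 j = 0 := by
  have hj' := j.isLt
  simp only [Matrix.of_apply, ent, Fin.val_zero]
  split_ifs <;> first | rfl | exact (‹False›).elim | omega | (simp_all; omega) | simp_all

theorem col0_zero (m : ℕ) (d0 : ℚ) (i : Fin (m + 7)) (hi : 2 ≤ (i : ℕ)) :
    (Matrix.of fun i j : Fin (m + 7) => ent (m + 6) d0 i j) i 0 = 0 := by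
  have hi' := i.isLt
  simp only [Matrix.of_apply, ent, Fin.val_zero]
  split_ifs <;> first | rfl | exact (‹False›).elim | omega | (simp_all; omega) | simp_all

theorem ent_00 (m : ℕ) (d0 : ℚ) :
    (Matrix.of fun i j : Fin (m + 7) => ent (m + 6) d0 i j) 0 0 = d0 := by
  simp only [Matrix.of_apply, ent, Fin.val_zero]
  norm_num

theorem ent_01 (m : ℕ) (d0 : ℚ) :
    (Matrix.of fun i j : Fin (m + 7) => ent (m + 6) d0 i j) 0 1 = -1 := by
  simp only [Matrix.of_apply, ent, Fin.val_zero, Fin.val_one]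
  split_ifs <;> first | rfl | exact (‹False›).elim | omega | (simp_all; omega) | simp_all

theorem ent_10 (m : ℕ) (d0 : ℚ) :
    (Matrix.of fun i j : Fin (m + 7) => ent (m + 6) d0 i j) 1 0 = -1 := by
  simp only [Matrix.of_apply, ent, Fin.val_zero, Fin.val_one]
  split_ifs <;> first | rfl | exact (‹False›).elim | omega | (simp_all; omega) | simp_all

theorem gen_rec (m : ℕ) (d0 : ℚ) :
    (Matrix.of fun i j : Fin (m + 7) => ent (m + 6) d0 i j).det
      = d0 * (TMat (m + 1)).det - (TMat m).det := by
  have h := expand2 (k := m + 5) (Matrix.of fun i j : Fin (m + 7) => ent (m + 6) d0 i j)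
    (row0_zero m d0) (col0_zero m d0)
  rw [ent_00, ent_01, ent_10] at h
  have h1 : (Matrix.of fun i j : Fin (m + 7) => ent (m + 6) d0 i j).submatrix
      Fin.succ Fin.succ = TMat (m + 1) := sub_succ (m + 1) d0
  rw [h1] at h
  have h2 : (TMat (m + 1)).submatrix Fin.succ Fin.succ = TMat m := sub_succ m (-2)
  rw [h2] at h
  rw [h]
  ring

set_option maxHeartbeats 1000000
set_option maxRecDepth 8000

theorem detS0 : (SMat 0).det = 5 := by
  have h : SMat 0 = !![-1,-1,0,0,0; -1,-2,-1,-1,-1; 0,-1,-2,-1,-1; 0,-1,-1,-2,-3; 0,-1,-1,-3,0] := by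
    ext i j
    fin_cases i <;> fin_cases j <;> rfl
  rw [h]
  simp (config := {decide := true}) [Matrix.det_succ_row_zero, Fin.sum_univ_succ, Fin.succAbove]
  norm_num

theorem detT0 : (TMat 0).det = 24 := by
  have h : TMat 0 = !![-2,-1,0,0,0; -1,-2,-1,-1,-1; 0,-1,-2,-1,-1; 0,-1,-1,-2,-3; 0,-1,-1,-3,0] := by
    ext i j
    fin_cases i <;> fin_cases j <;> rfl
  rw [h]
  simp (config := {decide := true}) [Matrix.det_succ_row_zero, Fin.sum_univ_succ, Fin.succAbove]
  norm_num

theorem detS1 : (SMat 1).det = -5 := by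
  have h : SMat 1 = !![-1,-1,0,0,0,0; -1,-2,-1,0,0,0; 0,-1,-2,-1,-1,-1; 0,0,-1,-2,-1,-1; 0,0,-1,-1,-2,-3; 0,0,-1,-1,-3,0] := by
    ext i j
    fin_cases i <;> fin_cases j <;> rfl
  rw [h]
  simp (config := {decide := true}) [Matrix.det_succ_row_zero, Fin.sum_univ_succ, Fin.succAbove]
  norm_num

theorem detT1 : (TMat 1).det = -29 := by
  have h : TMat 1 = !![-2,-1,0,0,0,0; -1,-2,-1,0,0,0; 0,-1,-2,-1,-1,-1; 0,0,-1,-2,-1,-1; 0,0,-1,-1,-2,-3; 0,0,-1,-1,-3,0] := by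
    ext i j
    fin_cases i <;> fin_cases j <;> rfl
  rw [h]
  simp (config := {decide := true}) [Matrix.det_succ_row_zero, Fin.sum_univ_succ, Fin.succAbove]
  norm_num

theorem Tval : ∀ m : ℕ, (TMat m).det = (-1) ^ m * (5 * m + 24) := by
  intro m
  induction m using Nat.twoStepInduction with
  | zero => simpa using detT0
  | one => rw [detT1]; norm_num
  | more n ih1 ih2 =>
    have h : TMat (n + 2) = Matrix.of fun i j : Fin (n + 7) => ent (n + 6) (-2) i j := rfl
    rw [h, gen_rec n (-2), ih1, ih2]
    push_cast
    ring

theorem Sval : ∀ m : ℕ, (SMat m).det = 5 * (-1) ^ m := by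
  intro m
  induction m using Nat.twoStepInduction with
  | zero => simpa using detS0
  | one => rw [detS1]; norm_num
  | more n ih1 ih2 =>
    have h : SMat (n + 2) = Matrix.of fun i j : Fin (n + 7) => ent (n + 6) (-1) i j := rfl
    rw [h, gen_rec n (-1), Tval, Tval]
    push_cast
    ring

theorem extM_apply (n : ℕ) (i j : Fin (n + 1)) :
    extM n (vecC2 n) i j =
      if (i : ℕ) = 0 then (if (j : ℕ) = 1 then -3 else if (j : ℕ) = 2 ∨ (j : ℕ) = 3 then -1 else 0)
      else if (j : ℕ) = 0 then
        (if (i : ℕ) = 1 then -3 else if (i : ℕ) = 2 ∨ (i : ℕ) = 3 then -1 else 0)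
      else if (i : ℕ) = (j : ℕ) then (if (i : ℕ) = n then -1 else -2)
      else if (i : ℕ) + 1 = (j : ℕ) ∨ (j : ℕ) + 1 = (i : ℕ) then -1
      else if ((i : ℕ) = 1 ∧ (j : ℕ) = 3) ∨ ((i : ℕ) = 3 ∧ (j : ℕ) = 1) then -1
      else 0 := by
  induction i using Fin.cases with
  | zero =>
    induction j using Fin.cases with
    | zero => simp [extM]
    | succ j =>
      have hj := j.isLt
      simp only [extM, Matrix.of_apply, Fin.cases_zero, Fin.cases_succ, vecC2, Fin.val_succ,
        Fin.val_zero]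
      split_ifs <;> first | rfl | exact (‹False›).elim | omega | (simp_all; omega) | simp_all
  | succ i =>
    induction j using Fin.cases with
    | zero =>
      have hi := i.isLt
      simp only [extM, Matrix.of_apply, Fin.cases_zero, Fin.cases_succ, vecC2, Fin.val_succ,
        Fin.val_zero]
      split_ifs <;> first | rfl | exact (‹False›).elim | omega | (simp_all; omega) | simp_all
    | succ j =>
      have hi := i.isLt
      have hj := j.isLt
      simp only [extM, Matrix.of_apply, Fin.cases_succ, linkM, Fin.val_succ]
      split_ifs <;> first | rfl | exact (‹False›).elim | omega | (simp_all; omega) | simp_all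

theorem rev_eq (m : ℕ) :
    (extM (m + 4) (vecC2 (m + 4))).submatrix Fin.rev Fin.rev = SMat m := by
  ext i j
  have hi := i.isLt
  have hj := j.isLt
  rw [Matrix.submatrix_apply, extM_apply]
  have hri : ((Fin.rev i : Fin (m + 5)) : ℕ) = m + 5 - (↑i + 1) := Fin.val_rev i
  have hrj : ((Fin.rev j : Fin (m + 5)) : ℕ) = m + 5 - (↑j + 1) := Fin.val_rev j
  rw [hri, hrj]
  simp only [SMat, Matrix.of_apply, ent]
  split_ifs <;> first | rfl | exact (‹False›).elim | omega | (simp_all; omega) | simp_all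


/-- `det M₂ = 5 * (-1)^n`. -/
theorem stmt_4 (n : ℕ) (hn : 4 ≤ n) :
    (extM n (vecC2 n)).det = 5 * (-1 : ℚ) ^ n := by
  obtain ⟨m, rfl⟩ : ∃ m, n = m + 4 := ⟨n - 4, by omega⟩
  have h1 : ((extM (m + 4) (vecC2 (m + 4))).submatrix
      (⇑(Fin.revPerm : Equiv.Perm (Fin (m + 5)))) (⇑Fin.revPerm)).det
      = (extM (m + 4) (vecC2 (m + 4))).det :=
    Matrix.det_submatrix_equiv_self Fin.revPerm _
  have h2 : (extM (m + 4) (vecC2 (m + 4))).submatrix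
      (⇑(Fin.revPerm : Equiv.Perm (Fin (m + 5)))) (⇑Fin.revPerm) = SMat m := by
    have : ⇑(Fin.revPerm : Equiv.Perm (Fin (m + 5))) = Fin.rev := by
      funext x; exact Fin.revPerm_apply x
    rw [this]
    exact rev_eq m
  rw [← h1, h2, Sval m]
  have : (-1 : ℚ) ^ (m + 4) = (-1) ^ m := by
    rw [pow_add]; norm_num
  rw [this]
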